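/- Let a ≥ 0, β ∈ ℝ, r > 0, θ ∈ (θ₀, π/2) with tan θ₀ ≥ |β|/√2, and let λ ∈ cl(Σ_{θ,r}). Then neither root z₁(λ), z₂(λ) of (λ − z)(λ + a − z) + (β²/2)(z² − az) = 0 lies on the nonpositive real axis ℝ₋ ∪ {0}. That is, there is no α ∈ ℝ with (λ + α²)(λ + a + α²) + (β²/2)(α⁴ + aα²) = 0 for λ in the closed truncated sector. -/

import Mathlib

open Real

set_option maxHeartbeats 1000000 in
/-- For `θ ∈ (θ₀, π/2)` with `tan θ₀ ≥ |β|/√2` and `λ` in the closure of the truncated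
sector `Σ_{θ,r}`, there is no `α ∈ ℝ` with
`(λ + α²)(λ + a + α²) + (β²/2)(α⁴ + aα²) = 0`; i.e. no root of the quadratic lies on
the nonpositive real axis. -/
theorem stmt_7 (a β θ₀ θ r : ℝ) (ha : 0 ≤ a) (hr : 0 < r)
    (hθ₀ : 0 < θ₀) (htan : |β| / Real.sqrt 2 ≤ Real.tan θ₀)
    (hθ : θ ∈ Set.Ioo θ₀ (π / 2))
    (lam : ℂ)
    (hlam : lam ∈ closure {z : ℂ | z ≠ 0 ∧ |z.arg| < π - θ ∧ r < ‖z‖}) :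
    ¬ ∃ α : ℝ, (lam + ((α : ℂ)) ^ 2) * (lam + (a : ℂ) + ((α : ℂ)) ^ 2)
        + (β : ℂ) ^ 2 / 2 * (((α : ℂ)) ^ 4 + (a : ℂ) * ((α : ℂ)) ^ 2) = 0 := by
  have hθpos : 0 < θ := hθ₀.trans hθ.1
  have hθlt : θ < π / 2 := hθ.2
  have hπ : 0 < π := Real.pi_pos
  -- (A) r ≤ |lam|
  have h1 : r ≤ ‖lam‖ := by
    have : lam ∈ {z : ℂ | r ≤ ‖z‖} := by
      refine closure_minimal (fun z hz => hz.2.2.le)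
        (isClosed_le continuous_const continuous_norm) hlam
    exact this
  -- (B) |lam| * cos (π - θ) ≤ lam.re
  have h2 : ‖lam‖ * Real.cos (π - θ) ≤ lam.re := by
    have : lam ∈ {z : ℂ | ‖z‖ * Real.cos (π - θ) ≤ z.re} := by
      refine closure_minimal ?_
        (isClosed_le (continuous_norm.mul continuous_const) Complex.continuous_re) hlam
      rintro z ⟨hz0, harg, _⟩
      have hcos : Real.cos (π - θ) < Real.cos z.arg := by
        rw [← Real.cos_abs z.arg]
        exact Real.cos_lt_cos_of_nonneg_of_le_pi (abs_nonneg _) (by linarith) harg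
      have hca := Complex.cos_arg hz0
      have habs : 0 < ‖z‖ := norm_pos_iff.mpr hz0
      have hre : z.re = ‖z‖ * Real.cos z.arg := by
        rw [hca, mul_div_assoc', mul_div_cancel_left₀ _ habs.ne']
      show ‖z‖ * Real.cos (π - θ) ≤ z.re
      rw [hre]
      exact mul_le_mul_of_nonneg_left hcos.le habs.le
    exact this
  rw [Real.cos_pi_sub] at h2
  have hmpos : 0 < ‖lam‖ := lt_of_lt_of_le hr h1
  have hcosθ : 0 < Real.cos θ := Real.cos_pos_of_mem_Ioo ⟨by linarith, hθlt⟩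
  have hcos1 : Real.cos θ < 1 := by
    have := Real.cos_lt_cos_of_nonneg_of_le_pi le_rfl (by linarith) hθpos
    simpa using this
  have htanθ : |β| / Real.sqrt 2 < Real.tan θ :=
    lt_of_le_of_lt htan
      (Real.tan_lt_tan_of_lt_of_lt_pi_div_two (by linarith) hθlt hθ.1)
  have htansq : β ^ 2 / 2 < Real.tan θ ^ 2 := by
    have h0 : 0 ≤ |β| / Real.sqrt 2 := div_nonneg (abs_nonneg β) (Real.sqrt_nonneg 2)
    have hsq : (|β| / Real.sqrt 2) ^ 2 = β ^ 2 / 2 := by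
      rw [div_pow, sq_abs, Real.sq_sqrt (by norm_num : (0:ℝ) ≤ 2)]
    nlinarith [htanθ, h0]
  rintro ⟨α, heq⟩
  set x := lam.re with hx
  set y := lam.im with hy
  set t := α ^ 2 with ht
  have ht0 : 0 ≤ t := sq_nonneg α
  have hc0 : 0 ≤ t ^ 2 + a * t := by positivity
  have heq' : lam ^ 2 + ((2 * t + a : ℝ) : ℂ) * lam
      + (((1 + β ^ 2 / 2) * (t ^ 2 + a * t) : ℝ) : ℂ) = 0 := by
    rw [← heq]; push_cast [ht]; ring
  have E1 : x ^ 2 - y ^ 2 + (2 * t + a) * x + (1 + β ^ 2 / 2) * (t ^ 2 + a * t) = 0 := by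
    have := congrArg Complex.re heq'
    simpa [pow_two, Complex.mul_re, Complex.add_re, Complex.mul_im, ← hx, ← hy] using this
  have E2 : y * (2 * x + (2 * t + a)) = 0 := by
    have := congrArg Complex.im heq'
    simp [pow_two, Complex.mul_re, Complex.add_im, Complex.mul_im, ← hx, ← hy] at this
    linarith [this]
  have hm2 : ‖lam‖ ^ 2 = x ^ 2 + y ^ 2 := by
    rw [Complex.sq_norm, Complex.normSq_apply, ← hx, ← hy]; ring
  -- helper: if y = 0 then contradiction (covers the "lam real" case)
  have hreal : y ≠ 0 := by
    intro hy0
    have hlamx : lam = (x : ℂ) := by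
      apply Complex.ext
      · simp [hx]
      · simp [← hy, hy0]
    have hax : ‖lam‖ = |x| := by rw [hlamx]; simp
    have hxne : x ≠ 0 := by
      intro h0
      rw [hax, h0] at hmpos
      simp at hmpos
    rcases lt_or_gt_of_ne hxne with hneg | hpos
    · -- x < 0 : contradicts angle condition
      rw [hax, abs_of_neg hneg] at h2
      nlinarith [mul_pos (neg_pos.mpr hneg) (by linarith : (0:ℝ) < 1 - Real.cos θ)]
    · -- x > 0 : all terms of E1 positive
      have h3 : 0 ≤ (2 * t + a) * x := mul_nonneg (by linarith) hpos.le
      have h4 : 0 ≤ (1 + β ^ 2 / 2) * (t ^ 2 + a * t) :=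
        mul_nonneg (by positivity) hc0
      have E1' : x ^ 2 + (2 * t + a) * x + (1 + β ^ 2 / 2) * (t ^ 2 + a * t) = 0 := by
        rw [hy0] at E1; linarith [E1]
      linarith [E1', h3, h4, pow_pos hpos 2]
  -- complex case: 2x + (2t+a) = 0
  have hx0 : 2 * x + (2 * t + a) = 0 := by
    rcases mul_eq_zero.mp E2 with h | h
    · exact absurd h hreal
    · exact h
  have hxval : x = -(2 * t + a) / 2 := by linarith
  have hy2' : y ^ 2 = β ^ 2 / 2 * (t ^ 2 + a * t) - a ^ 2 / 4 := by
    have : x ^ 2 - y ^ 2 + (2 * t + a) * x + (1 + β ^ 2 / 2) * (t ^ 2 + a * t) = 0 := E1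
    rw [hxval] at this
    linarith [this]
  have hb : 0 ≤ 2 * t + a := by linarith
  have hsq : Real.cos θ ^ 2 * (x ^ 2 + y ^ 2) ≥ (2 * t + a) ^ 2 / 4 := by
    have hL : (2 * t + a) / 2 ≤ ‖lam‖ * Real.cos θ := by
      rw [hxval] at h2; linarith
    have hR : (0:ℝ) ≤ (2 * t + a) / 2 := by linarith
    have he : Real.cos θ ^ 2 * (x ^ 2 + y ^ 2)
        = (‖lam‖ * Real.cos θ) * (‖lam‖ * Real.cos θ) := by
      rw [← hm2]; ring
    rw [ge_iff_le, he]
    nlinarith [mul_self_le_mul_self hR hL]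
  have hsin : Real.sin θ ^ 2 = 1 - Real.cos θ ^ 2 := by
    have := Real.sin_sq_add_cos_sq θ; linarith
  have hycs : Real.cos θ ^ 2 * y ^ 2 ≥ (2 * t + a) ^ 2 / 4 * Real.sin θ ^ 2 := by
    have hx2 : x ^ 2 = (2 * t + a) ^ 2 / 4 := by rw [hxval]; ring
    rw [hx2] at hsq
    rw [hsin]
    nlinarith [hsq]
  have hytan : y ^ 2 ≥ (2 * t + a) ^ 2 / 4 * Real.tan θ ^ 2 := by
    have hrw : (2 * t + a) ^ 2 / 4 * Real.tan θ ^ 2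
        = ((2 * t + a) ^ 2 / 4 * Real.sin θ ^ 2) / Real.cos θ ^ 2 := by
      rw [Real.tan_eq_sin_div_cos, div_pow]; ring
    rw [ge_iff_le, hrw, div_le_iff₀ (by positivity)]
    nlinarith [hycs]
  have hbpos : 0 < 2 * t + a := by
    rcases hb.lt_or_eq with h | h
    · exact h
    · exfalso
      have ht0' : t = 0 := by linarith
      have ha0 : a = 0 := by linarith
      have : y ^ 2 = 0 := by rw [hy2', ht0', ha0]; ring
      exact hreal (pow_eq_zero_iff (by norm_num) |>.mp this)
  have hyub : y ^ 2 ≤ β ^ 2 / 2 * ((2 * t + a) ^ 2 / 4) := by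
    rw [hy2']
    nlinarith [sq_nonneg β, mul_nonneg ha ht0, sq_nonneg a, sq_nonneg t, mul_nonneg (sq_nonneg β) (mul_nonneg ha ht0)]
  have key : β ^ 2 / 2 * ((2 * t + a) ^ 2 / 4) < Real.tan θ ^ 2 * ((2 * t + a) ^ 2 / 4) :=
    mul_lt_mul_of_pos_right htansq (by positivity)
  nlinarith [hytan, hyub, key]
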